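/- Let k1 > 0, r0 > 0 and k2 ≥ 0 be real numbers, set u := √(k1² r0² + 1) and s0 := (k1 r0 − 1 + u)/r0. Then (2k1 − s0) − (k2²/s0) e^{r0(2k1 − s0)} = (r0/(k1 r0 − 1 + u)) · (2(u − 1)/r0² − k2² · exp(1 + k1 r0 − u)). In particular this quantity is strictly positive if and only if k2² < (2(u − 1)/r0²) · exp(u − 1 − k1 r0). -/

import Mathlib

open Real

/-- The identity for the exponential rate `λ` in Corollary 1.2: with
`u = √(k1² r0² + 1)` and `s0 = (k1 r0 - 1 + u)/r0`,
`(2k1 - s0) - (k2²/s0) e^{r0 (2k1 - s0)}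
  = (r0/(k1 r0 - 1 + u)) (2(u-1)/r0² - k2² exp(1 + k1 r0 - u))`,
and it is strictly positive iff `k2² < (2(u-1)/r0²) exp(u - 1 - k1 r0)`. -/
theorem corollary12_rate_identity (k1 r0 k2 : ℝ) (hk1 : 0 < k1) (hr0 : 0 < r0)
    (hk2 : 0 ≤ k2) :
    ((2 * k1 - (k1 * r0 - 1 + Real.sqrt (k1 ^ 2 * r0 ^ 2 + 1)) / r0) -
        (k2 ^ 2 / ((k1 * r0 - 1 + Real.sqrt (k1 ^ 2 * r0 ^ 2 + 1)) / r0)) *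
          Real.exp (r0 * (2 * k1 - (k1 * r0 - 1 + Real.sqrt (k1 ^ 2 * r0 ^ 2 + 1)) / r0)) =
      (r0 / (k1 * r0 - 1 + Real.sqrt (k1 ^ 2 * r0 ^ 2 + 1))) *
        (2 * (Real.sqrt (k1 ^ 2 * r0 ^ 2 + 1) - 1) / r0 ^ 2 -
          k2 ^ 2 * Real.exp (1 + k1 * r0 - Real.sqrt (k1 ^ 2 * r0 ^ 2 + 1)))) ∧
    (0 < (2 * k1 - (k1 * r0 - 1 + Real.sqrt (k1 ^ 2 * r0 ^ 2 + 1)) / r0) -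
        (k2 ^ 2 / ((k1 * r0 - 1 + Real.sqrt (k1 ^ 2 * r0 ^ 2 + 1)) / r0)) *
          Real.exp (r0 * (2 * k1 - (k1 * r0 - 1 + Real.sqrt (k1 ^ 2 * r0 ^ 2 + 1)) / r0)) ↔
      k2 ^ 2 < (2 * (Real.sqrt (k1 ^ 2 * r0 ^ 2 + 1) - 1) / r0 ^ 2) *
        Real.exp (Real.sqrt (k1 ^ 2 * r0 ^ 2 + 1) - 1 - k1 * r0)) := by
  set u := Real.sqrt (k1 ^ 2 * r0 ^ 2 + 1) with hu_def
  have hsq : u ^ 2 = k1 ^ 2 * r0 ^ 2 + 1 := Real.sq_sqrt (by positivity)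
  have hu0 : 0 ≤ u := Real.sqrt_nonneg _
  have hu1 : 1 < u := by nlinarith [mul_pos hk1 hr0]
  have hD : 0 < k1 * r0 - 1 + u := by nlinarith [mul_pos hk1 hr0]
  have hr0' : r0 ≠ 0 := ne_of_gt hr0
  have hD' : (k1 * r0 - 1 + u) ≠ 0 := ne_of_gt hD
  have harg : r0 * (2 * k1 - (k1 * r0 - 1 + u) / r0) = 1 + k1 * r0 - u := by
    field_simp; ring
  rw [harg]
  have hid : (2 * k1 - (k1 * r0 - 1 + u) / r0) -
      (k2 ^ 2 / ((k1 * r0 - 1 + u) / r0)) * Real.exp (1 + k1 * r0 - u) =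
      (r0 / (k1 * r0 - 1 + u)) *
        (2 * (u - 1) / r0 ^ 2 - k2 ^ 2 * Real.exp (1 + k1 * r0 - u)) := by
    field_simp
    linear_combination (-1) * hsq
  refine ⟨hid, ?_⟩
  rw [hid]
  have hpos : 0 < r0 / (k1 * r0 - 1 + u) := div_pos hr0 hD
  rw [mul_pos_iff_of_pos_left hpos, sub_pos, ← lt_div_iff₀ (Real.exp_pos _),
    div_eq_mul_inv, ← Real.exp_neg]
  rw [show u - 1 - k1 * r0 = -(1 + k1 * r0 - u) by ring]
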